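/- The feasible sets of the Degree Bounded Matroid Independent Set problem form a (Δ+1)-extendible independence system: if A ⊆ B are feasible, x ∉ B, and A + x is feasible, then there exists Z ⊆ B \ A with |Z| ≤ Δ+1 such that (B + x) \ Z is feasible. -/

import Mathlib

open scoped Classical

/-- Feasibility for the Degree Bounded Matroid Independent Set problem:
`S` is independent in the matroid `M` and respects the upper bound `g e`
on every hyperedge `e` of the hypergraph `H`. -/
def DBMISFeasible {V : Type*} (M : Matroid V) (H : Finset (Finset V))
    (g : Finset V → ℕ) (S : Finset V) : Prop :=
  M.Indep ↑S ∧ ∀ e ∈ H, (S ∩ e).card ≤ g e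

/-- The feasible sets of the Degree Bounded Matroid Independent Set problem form a
`(Δ+1)`-extendible independence system: if `A ⊆ B` are feasible, `x ∉ B` and `A + x`
is feasible, then there is `Z ⊆ B \ A` with `|Z| ≤ Δ + 1` such that `(B + x) \ Z`
is feasible. -/
theorem dbmis_extendible {V : Type*} [DecidableEq V] (M : Matroid V)
    (H : Finset (Finset V)) (g : Finset V → ℕ) (Δ : ℕ)
    (hdeg : ∀ x : V, (H.filter (fun e => x ∈ e)).card ≤ Δ)
    (A B : Finset V) (x : V)
    (hAB : A ⊆ B) (hA : DBMISFeasible M H g A) (hB : DBMISFeasible M H g B)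
    (hx : x ∉ B) (hAx : DBMISFeasible M H g (insert x A)) :
    ∃ Z ⊆ B \ A, Z.card ≤ Δ + 1 ∧ DBMISFeasible M H g ((insert x B) \ Z) := by
  have hxA : x ∉ A := fun h => hx (hAB h)
  -- normalize the decidability instance on `∩` occurring inside `DBMISFeasible`
  have interEq : ∀ (S e : Finset V), (S ∩ e : Finset V) =
      (@Inter.inter _ (@Finset.instInter V (fun a b => Classical.propDecidable (a = b))) S e) :=
    fun S e => Finset.ext fun z => by
      simp only [Finset.mem_inter]
  have hB2 : ∀ e ∈ H, (B ∩ e).card ≤ g e := fun e he => by rw [interEq]; exact hB.2 e he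
  have hAx2 : ∀ e ∈ H, ((insert x A) ∩ e).card ≤ g e := fun e he => by
    rw [interEq]; exact hAx.2 e he
  -- Matroid part: find Zm ⊆ B \ A of card ≤ 1 with (insert x B) \ Zm independent (as a set).
  have hmat : ∃ Zm : Finset V, Zm ⊆ B \ A ∧ Zm.card ≤ 1 ∧
      M.Indep ((insert x (B : Set V)) \ (Zm : Set V)) := by
    by_cases hBx : M.Indep (insert x (B : Set V))
    · exact ⟨∅, by simp, by simp, by simpa using hBx⟩
    · obtain ⟨J, hJ, hAxJ⟩ := (show M.Indep ↑(insert x A) from hAx.1).subset_isBasis'_of_subset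
        (X := insert x (B : Set V)) (by
          push_cast
          exact Set.insert_subset_insert (by exact_mod_cast hAB))
      have hBbasis : M.IsBasis' (B : Set V) (insert x (B : Set V)) := by
        constructor
        · exact ⟨hB.1, Set.subset_insert _ _⟩
        · rintro K ⟨hKind, hKsub⟩ hBK
          intro y hyK
          rcases hKsub hyK with hy | hy
          · subst hy
            exfalso
            apply hBx
            exact hKind.subset (by
              rw [Set.insert_subset_iff]; exact ⟨hyK, hBK⟩)
          · exact hy
      have hcard : J.encard = (B : Set V).encard := hJ.encard_eq_encard hBbasis
      have hxJ : x ∈ J := hAxJ (by simp)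
      have hxB' : x ∉ (B : Set V) := by exact_mod_cast hx
      have hne : J ≠ insert x (B : Set V) := by
        rintro rfl; exact hBx hJ.indep
      obtain ⟨y, hy, hyJ⟩ : ∃ y ∈ insert x (B : Set V), y ∉ J := by
        by_contra h
        push_neg at h
        exact hne (hJ.subset.antisymm h)
      have hyx : y ≠ x := fun h => hyJ (h ▸ hxJ)
      have hyB : y ∈ (B : Set V) := hy.resolve_left hyx
      have hyB' : y ∈ B := by exact_mod_cast hyB
      have hyA : y ∉ A := fun h => hyJ (hAxJ (by simp [h]))
      have hJsub : J ⊆ insert x (B : Set V) \ {y} :=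
        fun z hz => ⟨hJ.subset hz, fun h => hyJ (by rwa [← Set.mem_singleton_iff.mp h])⟩
      have hfin : (insert x (B : Set V) \ {y}).Finite :=
        ((B.finite_toSet.insert x).diff)
      have h1 : (insert x (B : Set V) \ {y}).encard + 1 = J.encard + 1 := by
        rw [Set.encard_diff_singleton_add_one hy, Set.encard_insert_of_notMem hxB', hcard]
      have hencard : (insert x (B : Set V) \ {y}).encard ≤ J.encard :=
        le_of_eq ((WithTop.add_right_inj WithTop.one_ne_top).mp h1)
      have hJeq : insert x (B : Set V) \ {y} = J :=
        (hfin.eq_of_subset_of_encard_le' hJsub hencard).symm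
      refine ⟨{y}, by simp [Finset.singleton_subset_iff, Finset.mem_sdiff, hyB', hyA], by simp, ?_⟩
      rw [Finset.coe_singleton, hJeq]
      exact hJ.indep
  obtain ⟨Zm, hZmsub, hZmcard, hZmind⟩ := hmat
  -- Hypergraph part
  set T : Finset (Finset V) := H.filter (fun e => x ∈ e ∧ g e ≤ (B ∩ e).card) with hT
  have hchoose : ∀ e ∈ T, ((B ∩ e) \ A).Nonempty := by
    intro e he
    rw [hT, Finset.mem_filter] at he
    obtain ⟨heH, hxe, hge⟩ := he
    have hA' : (A ∩ e).card < g e := by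
      have h2 := hAx2 e heH
      have hxAe : x ∉ A ∩ e := by simp [hxA]
      rw [Finset.insert_inter_of_mem hxe, Finset.card_insert_of_notMem hxAe] at h2
      omega
    have hlt : (A ∩ e).card < (B ∩ e).card := lt_of_lt_of_le hA' hge
    have hns : ¬ (B ∩ e ⊆ A ∩ e) := fun h => absurd (Finset.card_le_card h) (by omega)
    rw [Finset.not_subset] at hns
    obtain ⟨y, hy1, hy2⟩ := hns
    refine ⟨y, Finset.mem_sdiff.mpr ⟨hy1, fun h => hy2 ?_⟩⟩
    exact Finset.mem_inter.mpr ⟨h, (Finset.mem_inter.mp hy1).2⟩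
  choose f hf using hchoose
  set ZH : Finset V := T.attach.image (fun e => f e.1 e.2) with hZH
  have hZHsub : ZH ⊆ B \ A := by
    intro z hz
    rw [hZH, Finset.mem_image] at hz
    obtain ⟨⟨e, he⟩, _, rfl⟩ := hz
    have hfe := hf e he
    rw [Finset.mem_sdiff] at hfe ⊢
    exact ⟨(Finset.mem_inter.mp hfe.1).1, hfe.2⟩
  have hZHcard : ZH.card ≤ Δ := by
    calc ZH.card ≤ T.attach.card := Finset.card_image_le
    _ = T.card := Finset.card_attach
    _ ≤ (H.filter (fun e => x ∈ e)).card := by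
        apply Finset.card_le_card
        intro e he
        rw [hT, Finset.mem_filter] at he
        exact Finset.mem_filter.mpr ⟨he.1, he.2.1⟩
    _ ≤ Δ := hdeg x
  refine ⟨Zm ∪ ZH, Finset.union_subset hZmsub hZHsub, ?_, ?_, ?_⟩
  · calc (Zm ∪ ZH).card ≤ Zm.card + ZH.card := Finset.card_union_le _ _
    _ ≤ Δ + 1 := by omega
  · -- independence
    apply hZmind.subset
    intro z hz
    simp only [Finset.coe_sdiff, Set.mem_diff, Finset.mem_coe, Finset.coe_insert] at hz ⊢
    refine ⟨by simpa using hz.1, fun h => hz.2 (Finset.mem_union_left _ (by exact_mod_cast h))⟩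
  · -- hyperedge constraints
    intro e heH
    rw [← interEq]
    by_cases hcase : x ∈ e ∧ g e ≤ (B ∩ e).card
    · have heT : e ∈ T := Finset.mem_filter.mpr ⟨heH, hcase⟩
      have hfe := hf e heT
      rw [Finset.mem_sdiff] at hfe
      have hfeZ : f e heT ∈ Zm ∪ ZH := by
        apply Finset.mem_union_right
        rw [hZH, Finset.mem_image]
        exact ⟨⟨e, heT⟩, Finset.mem_attach _ _, rfl⟩
      have hsub : ((insert x B \ (Zm ∪ ZH)) ∩ e) ⊆ (insert x (B ∩ e)).erase (f e heT) := by
        intro z hz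
        rw [Finset.mem_inter, Finset.mem_sdiff] at hz
        obtain ⟨⟨hz1, hz2⟩, hz3⟩ := hz
        rw [Finset.mem_erase]
        constructor
        · rintro rfl; exact hz2 hfeZ
        · rcases Finset.mem_insert.mp hz1 with rfl | h
          · exact Finset.mem_insert_self _ _
          · exact Finset.mem_insert_of_mem (Finset.mem_inter.mpr ⟨h, hz3⟩)
      have hxBe : x ∉ B ∩ e := fun h => hx (Finset.mem_inter.mp h).1
      calc ((insert x B \ (Zm ∪ ZH)) ∩ e).card ≤ ((insert x (B ∩ e)).erase (f e heT)).card :=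
            Finset.card_le_card hsub
        _ = (insert x (B ∩ e)).card - 1 := Finset.card_erase_of_mem
            (Finset.mem_insert_of_mem hfe.1)
        _ = (B ∩ e).card := by
            rw [Finset.card_insert_of_notMem hxBe]; omega
        _ ≤ g e := hB2 e heH
    · push_neg at hcase
      by_cases hxe : x ∈ e
      · have hlt := hcase hxe
        have hsub : ((insert x B \ (Zm ∪ ZH)) ∩ e) ⊆ insert x (B ∩ e) := by
          intro z hz
          rw [Finset.mem_inter, Finset.mem_sdiff] at hz
          rcases Finset.mem_insert.mp hz.1.1 with rfl | h
          · exact Finset.mem_insert_self _ _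
          · exact Finset.mem_insert_of_mem (Finset.mem_inter.mpr ⟨h, hz.2⟩)
        calc ((insert x B \ (Zm ∪ ZH)) ∩ e).card ≤ (insert x (B ∩ e)).card :=
              Finset.card_le_card hsub
          _ = (B ∩ e).card + 1 := Finset.card_insert_of_notMem
              (fun h => hx (Finset.mem_inter.mp h).1)
          _ ≤ g e := by omega
      · have hsub : ((insert x B \ (Zm ∪ ZH)) ∩ e) ⊆ B ∩ e := by
          intro z hz
          rw [Finset.mem_inter, Finset.mem_sdiff] at hz
          rcases Finset.mem_insert.mp hz.1.1 with rfl | h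
          · exact absurd hz.2 hxe
          · exact Finset.mem_inter.mpr ⟨h, hz.2⟩
        exact le_trans (Finset.card_le_card hsub) (hB2 e heH)
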